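/- Let n ≥ 1 and let f : ℝⁿ → ℝⁿ be twice continuously differentiable. Let x₀ = (x₁⁰, …, xₙ⁰) ∈ ℝⁿ be a point at which the Jacobian matrix J(x₀) = (∂f_i/∂x_k(x₀)) is invertible, and let Γ = J(x₀)⁻¹ with entries Γ_{ik}. Let A, B, C be positive real numbers with max_i Σ_{k=1}^n |Γ_{ik}| ≤ A, max_i Σ_{k=1}^n |Γ_{ik} f_k(x₀)| ≤ B, and C ≤ 1/(2AB). Define R = {x ∈ ℝⁿ : max_i |x_i − x_i⁰| ≤ (AC)⁻¹ (1 − √(1 − 2ABC))}. If for every x ∈ R and every i = 1, …, n one has Σ_{j=1}^n Σ_{k=1}^n |∂²f_i/(∂x_j ∂x_k)(x)| ≤ C, then the equation f(x) = 0 has a solution x ∈ R. -/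

import Mathlib

open intervalIntegral in
lemma kanto_seg_bound {E : Type*} [NormedAddCommGroup E] [NormedSpace ℝ E] [CompleteSpace E]
    (g : E → E) (hg : ContDiff ℝ 1 g) (x₀ a b : E) (K : ℝ) (hK : 0 ≤ K)
    (hbd : ∀ s ∈ Set.Icc (0:ℝ) 1, ‖fderiv ℝ g (a + s • (b - a))‖ ≤
      K * ((1-s) * ‖a - x₀‖ + s * ‖b - x₀‖)) :
    ‖g b - g a‖ ≤ K/2 * (‖a - x₀‖ + ‖b - x₀‖) * ‖b - a‖ := by
  set α := ‖a - x₀‖ with hα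
  set β := ‖b - x₀‖ with hβ
  set c := ‖b - a‖ with hc
  set l : ℝ → E := fun s => a + s • (b - a) with hl
  have hlc : Continuous l := by fun_prop
  have hline : ∀ s : ℝ, HasDerivAt l (b - a) s := fun s => by
    rw [hl]; simpa using ((hasDerivAt_id s).smul_const (b - a)).const_add a
  have hφ : ∀ s : ℝ, HasDerivAt (fun t => g (l t)) (fderiv ℝ g (l s) (b - a)) s := fun s =>
    ((hg.differentiable one_ne_zero (l s)).hasFDerivAt).comp_hasDerivAt s (hline s)
  have hcont : Continuous fun s => fderiv ℝ g (l s) (b - a) :=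
    (ContinuousLinearMap.apply ℝ E (b - a)).continuous.comp
      ((hg.continuous_fderiv one_ne_zero).comp hlc)
  have hint : IntervalIntegrable (fun s => fderiv ℝ g (l s) (b - a)) MeasureTheory.volume 0 1 :=
    hcont.intervalIntegrable 0 1
  have key := integral_eq_sub_of_hasDerivAt (f := fun t => g (l t))
      (f' := fun s => fderiv ℝ g (l s) (b - a)) (a := (0:ℝ)) (b := 1)
      (fun x _ => hφ x) hint
  have e1 : l 1 = b := by simp [hl]
  have e0 : l 0 = a := by simp [hl]
  have heq : g b - g a = ∫ s in (0:ℝ)..1, fderiv ℝ g (l s) (b - a) := by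
    rw [e1, e0] at key
    exact key.symm
  rw [heq]
  have hb2 : ∀ s ∈ Set.uIoc (0:ℝ) 1, ‖fderiv ℝ g (l s) (b - a)‖ ≤
      (K * ((1-s) * α + s * β)) * c := by
    intro s hs
    rw [Set.uIoc_of_le (by norm_num : (0:ℝ) ≤ 1)] at hs
    have hs' : s ∈ Set.Icc (0:ℝ) 1 := ⟨le_of_lt hs.1, hs.2⟩
    calc ‖fderiv ℝ g (l s) (b - a)‖ ≤ ‖fderiv ℝ g (l s)‖ * c :=
          (fderiv ℝ g (l s)).le_opNorm _
      _ ≤ (K * ((1-s) * α + s * β)) * c :=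
          mul_le_mul_of_nonneg_right (hbd s hs') (norm_nonneg _)
  have hmain := norm_integral_le_of_norm_le (μ := MeasureTheory.volume) (a := (0:ℝ)) (b := 1)
    (f := fun s => fderiv ℝ g (l s) (b - a))
    (g := fun s => (K * ((1-s) * α + s * β)) * c)
    zero_le_one
    (Filter.Eventually.of_forall fun s hs => hb2 s (by rwa [Set.uIoc_of_le zero_le_one]))
    ((by fun_prop : Continuous fun s : ℝ => (K * ((1-s) * α + s * β)) * c).intervalIntegrable 0 1)
  have hfun : (fun s : ℝ => (K * ((1-s) * α + s * β)) * c)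
      = fun s : ℝ => (K*α*c) + s * (K*(β-α)*c) := by funext s; ring
  have hval : (∫ s in (0:ℝ)..1, (K * ((1-s) * α + s * β)) * c) = K/2*(α+β)*c := by
    rw [hfun, integral_add (intervalIntegrable_const)
      ((intervalIntegrable_id).mul_const _), integral_const, integral_mul_const, integral_id]
    simp [smul_eq_mul]; ring
  refine hmain.trans ?_
  rw [hval]

lemma kanto_mulVec_norm (n : ℕ) (Γ : Matrix (Fin n) (Fin n) ℝ) (A : ℝ)
    (hAbound : ∀ i, ∑ k, |Γ i k| ≤ A) (v : Fin n → ℝ) (hA : 0 ≤ A) :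
    ‖Γ.mulVec v‖ ≤ A * ‖v‖ := by
  rw [pi_norm_le_iff_of_nonneg (by positivity)]
  intro i
  calc |Γ.mulVec v i| = |∑ k, Γ i k * v k| := rfl
    _ ≤ ∑ k, |Γ i k * v k| := Finset.abs_sum_le_sum_abs _ _
    _ ≤ ∑ k, |Γ i k| * ‖v‖ := by
        refine Finset.sum_le_sum fun k _ => ?_
        rw [abs_mul]
        exact mul_le_mul_of_nonneg_left (norm_le_pi_norm v k) (abs_nonneg _)
    _ = (∑ k, |Γ i k|) * ‖v‖ := (Finset.sum_mul _ _ _).symm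
    _ ≤ A * ‖v‖ := mul_le_mul_of_nonneg_right (hAbound i) (norm_nonneg _)

lemma kanto_d2_bound (n : ℕ) (D : (Fin n → ℝ) →L[ℝ] ((Fin n → ℝ) →L[ℝ] (Fin n → ℝ)))
    (C : ℝ) (hC : 0 < C)
    (hb : ∀ i, ∑ j, ∑ k, |D (Pi.single j 1) (Pi.single k 1) i| ≤ C) :
    ‖D‖ ≤ C := by
  refine ContinuousLinearMap.opNorm_le_bound D hC.le fun u => ?_
  refine ContinuousLinearMap.opNorm_le_bound _ (by positivity) fun v => ?_
  have hu : u = ∑ j, u j • (Pi.single j 1 : Fin n → ℝ) := by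
    funext m; simp [Finset.sum_apply, Pi.single_apply]
  have hv : v = ∑ k, v k • (Pi.single k 1 : Fin n → ℝ) := by
    funext m; simp [Finset.sum_apply, Pi.single_apply]
  have step1 : ∀ j, D (Pi.single j 1) v = ∑ k, v k • D (Pi.single j 1) (Pi.single k 1) := by
    intro j
    conv_lhs => rw [hv]
    rw [map_sum]
    exact Finset.sum_congr rfl fun k _ => by rw [map_smul]
  have hexp : D u v = ∑ j, ∑ k, (u j * v k) • D (Pi.single j 1) (Pi.single k 1) := by
    conv_lhs => rw [hu]
    rw [map_sum, ContinuousLinearMap.sum_apply]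
    refine Finset.sum_congr rfl fun j _ => ?_
    rw [map_smul, ContinuousLinearMap.smul_apply, step1, Finset.smul_sum]
    exact Finset.sum_congr rfl fun k _ => by rw [smul_smul]
  rw [pi_norm_le_iff_of_nonneg (by positivity)]
  intro i
  rw [hexp]
  calc |(∑ j, ∑ k, (u j * v k) • D (Pi.single j 1) (Pi.single k 1)) i|
      = |∑ j, ∑ k, (u j * v k) * D (Pi.single j 1) (Pi.single k 1) i| := by
        simp [Finset.sum_apply]
    _ ≤ ∑ j, |∑ k, (u j * v k) * D (Pi.single j 1) (Pi.single k 1) i| :=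
        Finset.abs_sum_le_sum_abs _ _
    _ ≤ ∑ j, ∑ k, |(u j * v k) * D (Pi.single j 1) (Pi.single k 1) i| :=
        Finset.sum_le_sum fun j _ => Finset.abs_sum_le_sum_abs _ _
    _ ≤ ∑ j, ∑ k, (‖u‖ * ‖v‖) * |D (Pi.single j 1) (Pi.single k 1) i| := by
        refine Finset.sum_le_sum fun j _ => Finset.sum_le_sum fun k _ => ?_
        rw [abs_mul, abs_mul]
        exact mul_le_mul (mul_le_mul (norm_le_pi_norm u j) (norm_le_pi_norm v k)
          (abs_nonneg _) (norm_nonneg _)) le_rfl (abs_nonneg _) (by positivity)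
    _ = (‖u‖ * ‖v‖) * ∑ j, ∑ k, |D (Pi.single j 1) (Pi.single k 1) i| := by
        rw [Finset.mul_sum]
        exact Finset.sum_congr rfl fun j _ => (Finset.mul_sum _ _ _).symm
    _ ≤ (‖u‖ * ‖v‖) * C := mul_le_mul_of_nonneg_left (hb i) (by positivity)
    _ = C * ‖u‖ * ‖v‖ := by ring

noncomputable def kantoU (B K : ℝ) : ℕ → ℝ
  | 0 => 0
  | (k+1) => B + K/2 * (kantoU B K k)^2

noncomputable def kantoX {E : Type*} (g : E → E) (x₀ : E) : ℕ → E
  | 0 => x₀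
  | (k+1) => g (kantoX g x₀ k)

set_option maxHeartbeats 1000000 in
/-- Kantorovich's convergence theorem for Newton's method in ℝⁿ:
if `f` is C², the Jacobian `J` at `x₀` is invertible with `Γ = J⁻¹`, and
`A, B, C > 0` satisfy `max_i Σ_k |Γ_{ik}| ≤ A`, `max_i Σ_k |Γ_{ik} f_k(x₀)| ≤ B`,
`C ≤ 1/(2AB)`, and the second partial derivatives satisfy
`Σ_j Σ_k |∂²f_i/∂x_j∂x_k(x)| ≤ C` for all `x` in the region
`R = {x : max_i |x_i − x_i⁰| ≤ (AC)⁻¹(1 − √(1 − 2ABC))}`, then `f(x) = 0` has a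
solution in `R`. -/
theorem stmt19 (n : ℕ) (hn : 1 ≤ n)
    (f : (Fin n → ℝ) → (Fin n → ℝ)) (hf : ContDiff ℝ 2 f)
    (x₀ : Fin n → ℝ)
    (J : Matrix (Fin n) (Fin n) ℝ)
    (hJdef : ∀ i k, J i k = fderiv ℝ f x₀ (Pi.single k 1) i)
    (hJinv : IsUnit J)
    (Γ : Matrix (Fin n) (Fin n) ℝ) (hΓ : Γ = J⁻¹)
    (A B C : ℝ) (hA : 0 < A) (hB : 0 < B) (hC : 0 < C)
    (hAbound : ∀ i, ∑ k, |Γ i k| ≤ A)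
    (hBbound : ∀ i, ∑ k, |Γ i k * f x₀ k| ≤ B)
    (hCsmall : C ≤ 1 / (2 * A * B))
    (R : Set (Fin n → ℝ))
    (hR : R = {x | ∀ i, |x i - x₀ i| ≤
      (A * C)⁻¹ * (1 - Real.sqrt (1 - 2 * A * B * C))})
    (hCbound : ∀ x ∈ R, ∀ i,
      ∑ j, ∑ k, |fderiv ℝ (fderiv ℝ f) x (Pi.single j 1) (Pi.single k 1) i| ≤ C) :
    ∃ x ∈ R, f x = 0 := by
  classical
  -- basic scalars
  set s := Real.sqrt (1 - 2 * A * B * C) with hs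
  set K := A * C with hKdef
  have hK0 : 0 < K := mul_pos hA hC
  have h2 : 2 * A * B * C ≤ 1 := by
    have h' := (le_div_iff₀ (by positivity : (0:ℝ) < 2 * A * B)).mp hCsmall
    nlinarith
  have hsnn : 0 ≤ s := Real.sqrt_nonneg _
  have hs1 : s ≤ 1 := Real.sqrt_le_one.mpr (by nlinarith [mul_pos (mul_pos hA hB) hC])
  have hssq : s ^ 2 = 1 - 2 * A * B * C := Real.sq_sqrt (by linarith)
  set r := (A * C)⁻¹ * (1 - s) with hrdef
  have hr0 : 0 ≤ r := mul_nonneg (by positivity) (by linarith)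
  have hKr : K * r = 1 - s := by
    rw [hrdef, hKdef]; field_simp
  have hfix : B + K / 2 * r ^ 2 = r := by
    have h1 : (K * r) ^ 2 = (1 - s) ^ 2 := by rw [hKr]
    have h2' : K * B = A * B * C := by rw [hKdef]; ring
    have key : K * (B + K / 2 * r ^ 2) = K * r := by nlinarith [h1, hKr, hssq, h2']
    exact mul_left_cancel₀ (ne_of_gt hK0) key
  -- R is a closed ball
  have hRball : R = Metric.closedBall x₀ r := by
    rw [hR]; ext x
    rw [Metric.mem_closedBall, dist_eq_norm, pi_norm_le_iff_of_nonneg hr0]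
    simp [Real.norm_eq_abs, hrdef, hs]
  have hx₀R : x₀ ∈ R := by
    rw [hRball]; exact Metric.mem_closedBall_self hr0
  -- matrix facts
  have hdet : IsUnit J.det := (Matrix.isUnit_iff_isUnit_det J).mp hJinv
  have hΓJ : Γ * J = 1 := by rw [hΓ]; exact Matrix.nonsing_inv_mul J hdet
  have hJΓ : J * Γ = 1 := by rw [hΓ]; exact Matrix.mul_nonsing_inv J hdet
  have hfd : Differentiable ℝ f := hf.differentiable two_ne_zero
  have hf1 : ContDiff ℝ 1 (fderiv ℝ f) := hf.fderiv_right (by norm_num)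
  have hJmulVec : ∀ v, J.mulVec v = fderiv ℝ f x₀ v := by
    intro v
    have hv : v = ∑ k, v k • (Pi.single k 1 : Fin n → ℝ) := by
      funext j; simp [Finset.sum_apply, Pi.single_apply]
    funext i
    conv_rhs => rw [hv]
    rw [map_sum]
    simp only [map_smul, Finset.sum_apply, Pi.smul_apply, smul_eq_mul]
    simp only [Matrix.mulVec, dotProduct, hJdef]
    exact Finset.sum_congr rfl fun k _ => mul_comm _ _
  -- the continuous linear map N = Γ
  set N : (Fin n → ℝ) →L[ℝ] (Fin n → ℝ) :=
    LinearMap.toContinuousLinearMap (Matrix.mulVecLin Γ) with hNdef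
  have hNapp : ∀ v, N v = Γ.mulVec v := fun v => rfl
  have hNnorm : ∀ v, ‖N v‖ ≤ A * ‖v‖ := fun v => by
    rw [hNapp]; exact kanto_mulVec_norm n Γ A hAbound v hA.le
  have hNf₀ : ‖N (f x₀)‖ ≤ B := by
    rw [hNapp, pi_norm_le_iff_of_nonneg hB.le]
    intro i
    calc |Γ.mulVec (f x₀) i| = |∑ k, Γ i k * f x₀ k| := rfl
      _ ≤ ∑ k, |Γ i k * f x₀ k| := Finset.abs_sum_le_sum_abs _ _
      _ ≤ B := hBbound i
  have hNJ : ∀ v, N (fderiv ℝ f x₀ v) = v := by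
    intro v
    rw [hNapp, ← hJmulVec, Matrix.mulVec_mulVec, hΓJ, Matrix.one_mulVec]
  have hNinj : ∀ v, N v = 0 → v = 0 := by
    intro v hv
    rw [hNapp] at hv
    have : J.mulVec (Γ.mulVec v) = 0 := by rw [hv]; simp [Matrix.mulVec_zero]
    rwa [Matrix.mulVec_mulVec, hJΓ, Matrix.one_mulVec] at this
  -- second derivative bound and Jacobian Lipschitz
  have hD2 : ∀ x ∈ R, ‖fderiv ℝ (fderiv ℝ f) x‖ ≤ C := fun x hx =>
    kanto_d2_bound n _ C hC (hCbound x hx)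
  have hRconv : Convex ℝ R := hRball ▸ convex_closedBall x₀ r
  have hJlip : ∀ x ∈ R, ‖fderiv ℝ f x - fderiv ℝ f x₀‖ ≤ C * ‖x - x₀‖ := by
    intro x hx
    exact Convex.norm_image_sub_le_of_norm_fderiv_le
      (fun y _ => (hf1.differentiable one_ne_zero).differentiableAt) (fun y hy => hD2 y hy)
      hRconv hx₀R hx
  -- the iteration map g
  set g : (Fin n → ℝ) → (Fin n → ℝ) := fun x => x - N (f x) with hgdef
  have hg1 : ContDiff ℝ 1 g := by
    exact (contDiff_id.sub (N.contDiff.comp (hf.of_le one_le_two)))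
  have hgderiv : ∀ x, fderiv ℝ g x =
      ContinuousLinearMap.id ℝ (Fin n → ℝ) - N.comp (fderiv ℝ f x) := by
    intro x
    have h1 : HasFDerivAt g (ContinuousLinearMap.id ℝ (Fin n → ℝ) - N.comp (fderiv ℝ f x)) x :=
      (hasFDerivAt_id x).sub (N.hasFDerivAt.comp x (hfd x).hasFDerivAt)
    exact h1.fderiv
  have hgbd : ∀ x ∈ R, ‖fderiv ℝ g x‖ ≤ K * ‖x - x₀‖ := by
    intro x hx
    have heq : fderiv ℝ g x = N.comp (fderiv ℝ f x₀ - fderiv ℝ f x) := by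
      rw [hgderiv]
      ext v
      simp [hNJ v, map_sub]
    rw [heq]
    refine ContinuousLinearMap.opNorm_le_bound _ (by positivity) fun v => ?_
    calc ‖N ((fderiv ℝ f x₀ - fderiv ℝ f x) v)‖ ≤ A * ‖(fderiv ℝ f x₀ - fderiv ℝ f x) v‖ :=
          hNnorm _
      _ ≤ A * (‖fderiv ℝ f x₀ - fderiv ℝ f x‖ * ‖v‖) := by
          exact mul_le_mul_of_nonneg_left ((fderiv ℝ f x₀ - fderiv ℝ f x).le_opNorm v) hA.le
      _ ≤ A * ((C * ‖x - x₀‖) * ‖v‖) := by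
          have := hJlip x hx
          rw [← norm_neg] at this
          simp only [neg_sub] at this
          exact mul_le_mul_of_nonneg_left (mul_le_mul_of_nonneg_right this (norm_nonneg v)) hA.le
      _ = K * ‖x - x₀‖ * ‖v‖ := by rw [hKdef]; ring
  -- membership from norm bound
  have hmemR : ∀ x : Fin n → ℝ, ‖x - x₀‖ ≤ r → x ∈ R := by
    intro x hx; rw [hRball, Metric.mem_closedBall, dist_eq_norm]; exact hx
  have hnormR : ∀ x ∈ R, ‖x - x₀‖ ≤ r := by
    intro x hx; rw [hRball, Metric.mem_closedBall, dist_eq_norm] at hx; exact hx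
  -- segment estimate
  have hseg : ∀ a ∈ R, ∀ b ∈ R,
      ‖g b - g a‖ ≤ K/2 * (‖a - x₀‖ + ‖b - x₀‖) * ‖b - a‖ := by
    intro a ha b hb
    refine kanto_seg_bound g hg1 x₀ a b K hK0.le ?_
    intro t ht
    have hpt : a + t • (b - a) - x₀ = (1-t) • (a - x₀) + t • (b - x₀) := by
      module
    have hptnorm : ‖a + t • (b - a) - x₀‖ ≤ (1-t) * ‖a - x₀‖ + t * ‖b - x₀‖ := by
      rw [hpt]
      refine (norm_add_le _ _).trans ?_
      rw [norm_smul, norm_smul, Real.norm_eq_abs, Real.norm_eq_abs,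
        abs_of_nonneg (by linarith [ht.2] : (0:ℝ) ≤ 1 - t), abs_of_nonneg ht.1]
    have hptR : a + t • (b - a) ∈ R := by
      refine hmemR _ (hptnorm.trans ?_)
      have h1 := hnormR a ha
      have h2 := hnormR b hb
      nlinarith [ht.1, ht.2, norm_nonneg (a - x₀), norm_nonneg (b - x₀)]
    calc ‖fderiv ℝ g (a + t • (b - a))‖ ≤ K * ‖a + t • (b - a) - x₀‖ := hgbd _ hptR
      _ ≤ K * ((1-t) * ‖a - x₀‖ + t * ‖b - x₀‖) :=
          mul_le_mul_of_nonneg_left hptnorm hK0.le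
  -- the sequences
  set u : ℕ → ℝ := kantoU B K with hudef
  set X : ℕ → (Fin n → ℝ) := kantoX g x₀ with hXdef
  have hu0 : u 0 = 0 := by rw [hudef]; simp [kantoU]
  have huS : ∀ k, u (k+1) = B + K/2 * (u k)^2 := fun k => by rw [hudef]; simp [kantoU]
  have hX0 : X 0 = x₀ := by rw [hXdef]; simp [kantoX]
  have hXS : ∀ k, X (k+1) = g (X k) := fun k => by rw [hXdef]; simp [kantoX]
  have hgx₀ : ‖g x₀ - x₀‖ ≤ B := by
    rw [hgdef]; simpa using hNf₀
  have main : ∀ k, ‖X (k+1) - X k‖ ≤ u (k+1) - u k ∧ ‖X k - x₀‖ ≤ u k ∧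
      u k ≤ u (k+1) ∧ u (k+1) ≤ r := by
    intro k
    induction k with
    | zero =>
      refine ⟨?_, ?_, ?_, ?_⟩
      · rw [hXS 0, hX0, huS 0, hu0]; simpa using hgx₀
      · rw [hX0, hu0]; simp
      · rw [hu0, huS, hu0]; positivity
      · rw [huS, hu0]
        calc B + K/2 * (0:ℝ)^2 = B := by ring
          _ ≤ B + K/2 * r^2 := le_add_of_nonneg_right (by positivity)
          _ = r := hfix
    | succ k ih =>
      obtain ⟨ih1, ih2, ih3, ih4⟩ := ih
      have huk0 : 0 ≤ u k := le_trans (norm_nonneg _) ih2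
      have hukr : u k ≤ r := le_trans ih3 ih4
      have hXk1 : ‖X (k+1) - x₀‖ ≤ u (k+1) := by
        calc ‖X (k+1) - x₀‖ ≤ ‖X (k+1) - X k‖ + ‖X k - x₀‖ := norm_sub_le_norm_sub_add_norm_sub _ _ _
          _ ≤ (u (k+1) - u k) + u k := add_le_add ih1 ih2
          _ = u (k+1) := by ring
      have hXkR : X k ∈ R := hmemR _ (ih2.trans hukr)
      have hXk1R : X (k+1) ∈ R := hmemR _ (hXk1.trans ih4)
      have hstep : ‖X (k+1+1) - X (k+1)‖ ≤ u (k+1+1) - u (k+1) := by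
        calc ‖X (k+1+1) - X (k+1)‖
            = ‖g (X (k+1)) - g (X k)‖ := by rw [hXS (k+1), hXS k]
          _ ≤ K/2 * (‖X k - x₀‖ + ‖X (k+1) - x₀‖) * ‖X (k+1) - X k‖ :=
              hseg _ hXkR _ hXk1R
          _ ≤ K/2 * (u k + u (k+1)) * (u (k+1) - u k) := by
              have h1 : ‖X k - x₀‖ + ‖X (k+1) - x₀‖ ≤ u k + u (k+1) := add_le_add ih2 hXk1
              have h2 : (0:ℝ) ≤ K/2 * (‖X k - x₀‖ + ‖X (k+1) - x₀‖) := by positivity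
              calc K/2 * (‖X k - x₀‖ + ‖X (k+1) - x₀‖) * ‖X (k+1) - X k‖
                  ≤ K/2 * (‖X k - x₀‖ + ‖X (k+1) - x₀‖) * (u (k+1) - u k) :=
                    mul_le_mul_of_nonneg_left ih1 h2
                _ ≤ K/2 * (u k + u (k+1)) * (u (k+1) - u k) := by
                    have h3 : (0:ℝ) ≤ u (k+1) - u k := by linarith
                    have h4 : K/2 * (‖X k - x₀‖ + ‖X (k+1) - x₀‖) ≤ K/2 * (u k + u (k+1)) :=
                      mul_le_mul_of_nonneg_left h1 (by positivity)
                    exact mul_le_mul_of_nonneg_right h4 h3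
          _ = u (k+1+1) - u (k+1) := by
              rw [huS (k+1), huS k]; ring
      have huk10 : 0 ≤ u (k+1) := le_trans huk0 ih3
      have hmono : u (k+1) ≤ u (k+1+1) := by
        have hsq : u k ^ 2 ≤ u (k+1) ^ 2 := pow_le_pow_left₀ huk0 ih3 2
        calc u (k+1) = B + K/2 * u k ^ 2 := huS k
          _ ≤ B + K/2 * u (k+1) ^ 2 := by nlinarith [hK0.le]
          _ = u (k+1+1) := (huS (k+1)).symm
      have hle : u (k+1+1) ≤ r := by
        have hsq : u (k+1) ^ 2 ≤ r ^ 2 := pow_le_pow_left₀ huk10 ih4 2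
        calc u (k+1+1) = B + K/2 * u (k+1) ^ 2 := huS (k+1)
          _ ≤ B + K/2 * r ^ 2 := by nlinarith [hK0.le]
          _ = r := hfix
      exact ⟨hstep, hXk1, hmono, hle⟩
  have humono : Monotone u := monotone_nat_of_le_succ fun k => (main k).2.2.1
  have hubdd : ∀ k, u k ≤ r := by
    intro k
    cases k with
    | zero => rw [hu0]; exact hr0
    | succ k => exact (main k).2.2.2
  have hXR : ∀ k, X k ∈ R := fun k => hmemR _ (((main k).2.1).trans (hubdd k))
  -- convergence of u
  have hbddAbove : BddAbove (Set.range u) := ⟨r, by rintro _ ⟨k, rfl⟩; exact hubdd k⟩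
  set L := ⨆ k, u k with hLdef
  have huL : Filter.Tendsto u Filter.atTop (nhds L) := tendsto_atTop_ciSup humono hbddAbove
  have huleL : ∀ k, u k ≤ L := fun k => le_ciSup hbddAbove k
  -- telescoping
  have htel : ∀ k m, k ≤ m → ‖X m - X k‖ ≤ u m - u k := by
    intro k m hkm
    induction m, hkm using Nat.le_induction with
    | base => simp
    | succ m hkm ih =>
      calc ‖X (m+1) - X k‖ ≤ ‖X (m+1) - X m‖ + ‖X m - X k‖ :=
            norm_sub_le_norm_sub_add_norm_sub _ _ _
        _ ≤ (u (m+1) - u m) + (u m - u k) := add_le_add (main m).1 ih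
        _ = u (m+1) - u k := by ring
  -- Cauchy
  have hcauchy : CauchySeq X := by
    refine cauchySeq_of_le_tendsto_0 (fun N => L - u N) ?_ ?_
    · intro p q N hp hq
      rcases le_total p q with h | h
      · rw [dist_eq_norm, norm_sub_rev]
        calc ‖X q - X p‖ ≤ u q - u p := htel p q h
          _ ≤ L - u N := by linarith [huleL q, humono hp]
      · rw [dist_eq_norm]
        calc ‖X p - X q‖ ≤ u p - u q := htel q p h
          _ ≤ L - u N := by linarith [huleL p, humono hq]
    · have : Filter.Tendsto (fun N => L - u N) Filter.atTop (nhds (L - L)) :=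
        Filter.Tendsto.sub tendsto_const_nhds huL
      simpa using this
  obtain ⟨x, hx⟩ := cauchySeq_tendsto_of_complete hcauchy
  have hxR : x ∈ R := by
    rw [hRball]
    exact Metric.isClosed_closedBall.mem_of_tendsto hx
      (Filter.Eventually.of_forall fun k => hRball ▸ hXR k)
  have hgx : g x = x := by
    have h1 : Filter.Tendsto (fun k => X (k+1)) Filter.atTop (nhds x) :=
      hx.comp (Filter.tendsto_add_atTop_nat 1)
    have h2 : Filter.Tendsto (fun k => g (X k)) Filter.atTop (nhds (g x)) :=
      (hg1.continuous.tendsto x).comp hx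
    have h3 : (fun k => X (k+1)) = fun k => g (X k) := funext fun k => hXS k
    rw [h3] at h1
    exact tendsto_nhds_unique h2 h1
  refine ⟨x, hxR, ?_⟩
  have hNfx : N (f x) = 0 := sub_eq_self.mp (show x - N (f x) = x from hgx)
  exact hNinj _ hNfx
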